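/- (Single-node network, uniqueness of the equilibrium fixed point.) Let K ≥ 1, and for 1 ≤ k ≤ K let r_k ∈ (0,1), p_k > 0, a_k > 0, and let β_k: [0,∞) → (0,∞) be continuous and nondecreasing. Then there exists a unique u ≥ 0 satisfying u = Σ_{k=1}^{K} ψ(r_k) · p_k · √( a_k / β_k(u) ); moreover this u is strictly positive. -/

import Mathlib

noncomputable def psi (r : ℝ) : ℝ :=
  Real.sqrt (2 / Real.pi) * ∏' n : ℕ, (1 - r ^ (2 * n + 2)) / (1 - r ^ (2 * n + 1))

lemma aux_summable_log {r : ℝ} (h0 : 0 < r) (h1 : r < 1) (m : ℕ → ℕ)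
    (hm : ∀ n, n + 1 ≤ m n) : Summable fun n => Real.log (1 - r ^ m n) := by
  have hrn : ∀ n : ℕ, r ^ m n ≤ r ^ (n + 1) := fun n =>
    pow_le_pow_of_le_one h0.le h1.le (hm n)
  have hx1 : ∀ n : ℕ, r ^ m n < 1 := fun n =>
    lt_of_le_of_lt (hrn n) (by
      calc r ^ (n + 1) ≤ r ^ 1 := pow_le_pow_of_le_one h0.le h1.le (by omega)
        _ = r := pow_one r
        _ < 1 := h1)
  have hxpos : ∀ n : ℕ, 0 < r ^ m n := fun n => pow_pos h0 _
  rw [← summable_neg_iff]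
  apply Summable.of_nonneg_of_le
    (g := fun n => -Real.log (1 - r ^ m n))
    (f := fun n => (1 - r)⁻¹ * r ^ (n + 1))
  · intro n
    simp only [neg_nonneg]
    exact Real.log_nonpos (by linarith [hx1 n]) (by linarith [hxpos n])
  · intro n
    have h1x : (0:ℝ) < 1 - r ^ m n := by linarith [hx1 n]
    have := Real.log_le_sub_one_of_pos (inv_pos.mpr h1x)
    rw [Real.log_inv] at this
    have key : -Real.log (1 - r ^ m n) ≤ (1 - r ^ m n)⁻¹ - 1 := this
    have h1r : (0:ℝ) < 1 - r := by linarith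
    have : (1 - r ^ m n)⁻¹ - 1 = r ^ m n / (1 - r ^ m n) := by
      field_simp
      ring
    rw [this] at key
    calc -Real.log (1 - r ^ m n) ≤ r ^ m n / (1 - r ^ m n) := key
      _ ≤ r ^ (n + 1) / (1 - r) := by
          apply div_le_div₀ (by positivity) (hrn n) h1r
          have : r ^ m n ≤ r := by
            calc r ^ m n ≤ r ^ 1 := pow_le_pow_of_le_one h0.le h1.le (by have := hm n; omega)
              _ = r := pow_one r
          linarith
      _ = (1 - r)⁻¹ * r ^ (n + 1) := by rw [div_eq_inv_mul]
  · have : Summable fun n : ℕ => r ^ (n + 1) :=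
      (summable_geometric_of_lt_one h0.le h1).comp_injective (add_left_injective 1)
    exact this.mul_left _

lemma psi_pos {r : ℝ} (h0 : 0 < r) (h1 : r < 1) : 0 < psi r := by
  have hfac : ∀ n : ℕ, 0 < (1 - r ^ (2 * n + 2)) / (1 - r ^ (2 * n + 1)) := by
    intro n
    have h2 : r ^ (2 * n + 2) < 1 := pow_lt_one₀ h0.le h1 (by omega)
    have h3 : r ^ (2 * n + 1) < 1 := pow_lt_one₀ h0.le h1 (by omega)
    exact div_pos (by linarith) (by linarith)
  have hsum : Summable fun n : ℕ =>
      Real.log ((1 - r ^ (2 * n + 2)) / (1 - r ^ (2 * n + 1))) := by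
    have hs1 := aux_summable_log h0 h1 (fun n => 2 * n + 2) (fun n => by omega)
    have hs2 := aux_summable_log h0 h1 (fun n => 2 * n + 1) (fun n => by omega)
    apply (hs1.sub hs2).congr
    intro n
    have h2 : r ^ (2 * n + 2) < 1 := pow_lt_one₀ h0.le h1 (by omega)
    have h3 : r ^ (2 * n + 1) < 1 := pow_lt_one₀ h0.le h1 (by omega)
    rw [Real.log_div (by linarith) (by linarith)]
  have := Real.rexp_tsum_eq_tprod
    (f := fun n => (1 - r ^ (2 * n + 2)) / (1 - r ^ (2 * n + 1)))
    hfac hsum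
  have heq : Real.exp (∑' n : ℕ, Real.log ((1 - r ^ (2 * n + 2)) / (1 - r ^ (2 * n + 1)))) =
      ∏' n : ℕ, (1 - r ^ (2 * n + 2)) / (1 - r ^ (2 * n + 1)) := this
  have hprod : (0:ℝ) < ∏' n : ℕ, (1 - r ^ (2 * n + 2)) / (1 - r ^ (2 * n + 1)) := by
    rw [← heq]; exact Real.exp_pos _
  have hsq : (0:ℝ) < Real.sqrt (2 / Real.pi) := by
    apply Real.sqrt_pos.mpr
    positivity
  exact mul_pos hsq hprod

theorem stmt7 (K : ℕ) (hK : 1 ≤ K) (r p a : Fin K → ℝ) (β : Fin K → ℝ → ℝ)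
    (hr : ∀ k, 0 < r k ∧ r k < 1) (hp : ∀ k, 0 < p k) (ha : ∀ k, 0 < a k)
    (hβpos : ∀ k x, 0 ≤ x → 0 < β k x)
    (hβcont : ∀ k, ContinuousOn (β k) (Set.Ici 0))
    (hβmono : ∀ k, MonotoneOn (β k) (Set.Ici 0)) :
    (∃! u : ℝ, 0 ≤ u ∧ u = ∑ k, psi (r k) * p k * Real.sqrt (a k / β k u)) ∧
    ∀ u : ℝ, 0 ≤ u → u = ∑ k, psi (r k) * p k * Real.sqrt (a k / β k u) →
      0 < u := by
  set F : ℝ → ℝ := fun u => ∑ k, psi (r k) * p k * Real.sqrt (a k / β k u) with hF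
  have hc : ∀ k, 0 < psi (r k) * p k := fun k =>
    mul_pos (psi_pos (hr k).1 (hr k).2) (hp k)
  -- F is positive on [0, ∞)
  have hFpos : ∀ u : ℝ, 0 ≤ u → 0 < F u := by
    intro u hu
    apply Finset.sum_pos
    · intro k _
      apply mul_pos (hc k)
      exact Real.sqrt_pos.mpr (div_pos (ha k) (hβpos k u hu))
    · have : Nonempty (Fin K) := ⟨⟨0, hK⟩⟩
      exact Finset.univ_nonempty
  -- F is antitone on [0, ∞)
  have hFanti : ∀ x y : ℝ, 0 ≤ x → x ≤ y → F y ≤ F x := by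
    intro x y hx hxy
    apply Finset.sum_le_sum
    intro k _
    apply mul_le_mul_of_nonneg_left _ (hc k).le
    apply Real.sqrt_le_sqrt
    exact div_le_div_of_nonneg_left (ha k).le (hβpos k x hx)
      (hβmono k (Set.mem_Ici.mpr hx) (Set.mem_Ici.mpr (hx.trans hxy)) hxy)
  -- F is continuous on [0, ∞)
  have hFcont : ContinuousOn F (Set.Ici 0) := by
    apply continuousOn_finset_sum
    intro k _
    apply ContinuousOn.mul continuousOn_const
    apply Real.continuous_sqrt.comp_continuousOn
    exact continuousOn_const.div (hβcont k) (fun x hx => (hβpos k x hx).ne')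
  -- uniqueness helper
  have huniq : ∀ u v : ℝ, 0 ≤ u → u = F u → 0 ≤ v → v = F v → u = v := by
    intro u v hu hfu hv hfv
    rcases le_total u v with h | h
    · have : F v ≤ F u := hFanti u v hu h
      rw [← hfu, ← hfv] at this
      linarith
    · have : F u ≤ F v := hFanti v u hv h
      rw [← hfu, ← hfv] at this
      linarith
  -- existence via IVT on g u = u - F u over [0, F 0]
  set M : ℝ := F 0 with hM
  have hM0 : 0 < M := hFpos 0 le_rfl
  have hgc : ContinuousOn (fun u => u - F u) (Set.Icc 0 M) :=
    (continuousOn_id.sub (hFcont.mono (Set.Icc_subset_Ici_self)))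
  have h0mem : (0:ℝ) ∈ Set.Icc ((fun u => u - F u) 0) ((fun u => u - F u) M) := by
    constructor
    · simp only
      linarith
    · simp only
      have : F M ≤ F 0 := hFanti 0 M le_rfl hM0.le
      linarith
  obtain ⟨u, hu_mem, hu_eq⟩ := intermediate_value_Icc hM0.le hgc h0mem
  have hu0 : 0 ≤ u := hu_mem.1
  have hufix : u = F u := by
    have : u - F u = 0 := hu_eq
    linarith
  constructor
  · refine ⟨u, ⟨hu0, hufix⟩, ?_⟩
    intro v ⟨hv0, hvfix⟩
    exact huniq v u hv0 hvfix hu0 hufix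
  · intro v hv0 hvfix
    rw [hvfix]
    exact hFpos v hv0
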